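/- In ℙ² over an algebraically closed field of characteristic 2, suppose p₁ = (1:0:0), p₂ = (0:1:0), p₃ = (0:0:1), p₄ = (1:1:1), p₅ = (x₀:y₀:1), p₆ = (x₁:y₁:1) are six points, no three collinear, such that for each i the unique conic through the other five points is tangent to every line through pᵢ. Then x₀ + y₀ + 1 = 0, x₁ + y₁ + 1 = 0, x₁ = x₀², y₁ = x₀² + 1, and x₀ satisfies x₀² + x₀ + 1 = 0; in particular all six points have coordinates in 𝔽₄. -/

import Mathlib

/-- Evaluation of the quadratic form (conic) with coefficient vector `c` at the point
with homogeneous coordinates `v`: `c₀x² + c₁y² + c₂z² + c₃xy + c₄xz + c₅yz`. -/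
def evalConic {K : Type*} [Field K] (c : Fin 6 → K) (v : Fin 3 → K) : K :=
  c 0 * v 0 ^ 2 + c 1 * v 1 ^ 2 + c 2 * v 2 ^ 2 +
    c 3 * v 0 * v 1 + c 4 * v 0 * v 2 + c 5 * v 1 * v 2

/-- The line through `p` and `m` is tangent to the conic `{evalConic c = 0}`: the line
meets the conic, and in exactly one projective point. -/
def IsTangentLine {K : Type*} [Field K] (c : Fin 6 → K) (p m : Fin 3 → K) : Prop :=
  (∃ w : K × K, w ≠ 0 ∧ evalConic c (w.1 • p + w.2 • m) = 0) ∧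
  ∀ w w' : K × K, w ≠ 0 → w' ≠ 0 →
    evalConic c (w.1 • p + w.2 • m) = 0 → evalConic c (w'.1 • p + w'.2 • m) = 0 →
    w.1 * w'.2 = w.2 * w'.1

/-- Lemma 5.2 (coordinate computation): in `ℙ²` over an algebraically closed field of
characteristic 2, if `p₁ = (1:0:0)`, `p₂ = (0:1:0)`, `p₃ = (0:0:1)`, `p₄ = (1:1:1)`,
`p₅ = (x₀:y₀:1)`, `p₆ = (x₁:y₁:1)` are six points, no three collinear, such that for
each `i` every conic through the other five points is tangent to every line through
`pᵢ`, then `x₀+y₀+1 = 0`, `x₁+y₁+1 = 0`, `x₁ = x₀²`, `y₁ = x₀²+1` and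
`x₀² + x₀ + 1 = 0` (so all coordinates lie in `𝔽₄`). -/
lemma tangent_B {K : Type*} [Field K] [IsAlgClosed K] [CharP K 2]
    (c : Fin 6 → K) (p m : Fin 3 → K)
    (h0 : c 0 = 0) (h1 : c 1 = 0) (h2 : c 2 = 0)
    (ht : IsTangentLine c p m) :
    c 3 * (p 0 * m 1 + p 1 * m 0) + c 4 * (p 0 * m 2 + p 2 * m 0)
      + c 5 * (p 1 * m 2 + p 2 * m 1) = 0 := by
  have two : (2:K) = 0 := by exact_mod_cast CharP.cast_eq_zero K 2
  set A := evalConic c p with hA'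
  set C := evalConic c m with hC'
  set B := c 3 * (p 0 * m 1 + p 1 * m 0) + c 4 * (p 0 * m 2 + p 2 * m 0)
      + c 5 * (p 1 * m 2 + p 2 * m 1) with hB'
  have key : ∀ w1 w2 : K, evalConic c (w1 • p + w2 • m) = A*w1^2 + B*w1*w2 + C*w2^2 := by
    intro w1 w2
    simp only [evalConic, Pi.add_apply, Pi.smul_apply, smul_eq_mul, hA', hB', hC', h0, h1, h2]
    ring
  obtain ⟨hex, huniq⟩ := ht
  by_contra hB
  by_cases hA : A = 0
  · have r1 : evalConic c ((1:K) • p + (0:K) • m) = 0 := by rw [key]; rw [hA]; ring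
    have r2 : evalConic c (C • p + B • m) = 0 := by
      rw [key, hA]; linear_combination (C*B^2) * two
    have := huniq (1,0) (C,B) (by simp) (by simp [hB]) r1 r2
    simp at this
    exact hB this
  · obtain ⟨t1, ht1⟩ : ∃ t : K, A*t^2 + B*t + C = 0 := by
      obtain ⟨t, htr⟩ := IsAlgClosed.exists_root
        (Polynomial.C A * Polynomial.X^2 + Polynomial.C B * Polynomial.X + Polynomial.C C)
        (by rw [Polynomial.degree_quadratic hA]; exact (by decide : (2:WithBot ℕ) ≠ 0))
      refine ⟨t, ?_⟩
      simpa [Polynomial.IsRoot, Polynomial.eval_add, Polynomial.eval_mul, Polynomial.eval_pow]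
        using htr
    set s := B / A with hs'
    have hs : A * s = B := by rw [hs']; field_simp
    have ht2 : A*(t1+s)^2 + B*(t1+s) + C = 0 := by
      linear_combination ht1 + s * hs + (A*t1*s + B*s) * two
    have r1 : evalConic c (t1 • p + (1:K) • m) = 0 := by rw [key]; linear_combination ht1
    have r2 : evalConic c ((t1+s) • p + (1:K) • m) = 0 := by rw [key]; linear_combination ht2
    have heq := huniq (t1,1) (t1+s,1) (by simp) (by simp) r1 r2
    simp only [one_mul, mul_one] at heq
    have hs0 : s = 0 := by linear_combination -heq
    exact hB (by rw [← hs, hs0, mul_zero])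

theorem stmt16 {K : Type*} [Field K] [IsAlgClosed K] [CharP K 2]
    (x₀ y₀ x₁ y₁ : K) (p : Fin 6 → Fin 3 → K)
    (hp0 : p 0 = ![1, 0, 0]) (hp1 : p 1 = ![0, 1, 0]) (hp2 : p 2 = ![0, 0, 1])
    (hp3 : p 3 = ![1, 1, 1]) (hp4 : p 4 = ![x₀, y₀, 1]) (hp5 : p 5 = ![x₁, y₁, 1])
    (hcol : ∀ i j k : Fin 6, i ≠ j → i ≠ k → j ≠ k →
      Matrix.det (Matrix.of ![p i, p j, p k]) ≠ 0)
    (htan : ∀ i : Fin 6, ∀ c : Fin 6 → K, c ≠ 0 →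
      (∀ j : Fin 6, j ≠ i → evalConic c (p j) = 0) →
      ∀ m : Fin 3 → K, m ≠ 0 → (∀ t : K, m ≠ t • p i) →
      IsTangentLine c (p i) m) :
    x₀ + y₀ + 1 = 0 ∧ x₁ + y₁ + 1 = 0 ∧ x₁ = x₀ ^ 2 ∧ y₁ = x₀ ^ 2 + 1 ∧
      x₀ ^ 2 + x₀ + 1 = 0 := by
  have two : (2:K) = 0 := by exact_mod_cast CharP.cast_eq_zero K 2
  have det_val : ∀ (a b c d e f g h i : K),
      Matrix.det (Matrix.of ![![a,b,c],![d,e,f],![g,h,i]])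
        = a*e*i - a*f*h - b*d*i + b*f*g + c*d*h - c*e*g := by
    intros
    simp [Matrix.det_fin_three, Matrix.vecHead, Matrix.vecTail]
  -- non-collinearity facts
  have hx0 : x₀ ≠ 0 := by
    have d := hcol 1 2 4 (by decide) (by decide) (by decide)
    rw [hp1, hp2, hp4, det_val] at d
    intro h; apply d; rw [h]; ring
  have hx0ne1 : x₀ ≠ 1 := by
    have d := hcol 1 3 4 (by decide) (by decide) (by decide)
    rw [hp1, hp3, hp4, det_val] at d
    intro h; apply d; rw [h]; ring
  have hx0p1 : x₀ + 1 ≠ 0 := by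
    intro h; apply hx0ne1; linear_combination h - two
  have hs0 : x₀ + y₀ ≠ 0 := by
    have d := hcol 2 3 4 (by decide) (by decide) (by decide)
    rw [hp2, hp3, hp4, det_val] at d
    intro h; apply d; linear_combination h - x₀ * two
  have hs1 : x₁ + y₁ ≠ 0 := by
    have d := hcol 2 3 5 (by decide) (by decide) (by decide)
    rw [hp2, hp3, hp5, det_val] at d
    intro h; apply d; linear_combination h - x₁ * two
  -- the conic through p₀,…,p₄ (omitting p₅)
  set c : Fin 6 → K := ![0,0,0,x₀+y₀,x₀*y₀+y₀,x₀+x₀*y₀] with hcdef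
  have hcne : c ≠ 0 := by
    intro h
    apply hs0
    have := congrFun h 3
    simpa [hcdef] using this
  have hvan : ∀ j : Fin 6, j ≠ 5 → evalConic c (p j) = 0 := by
    intro j hj
    fin_cases j
    · change evalConic c (p 0) = 0
      rw [hp0]
      show (0:K) * 1 ^ 2 + 0 * 0 ^ 2 + 0 * 0 ^ 2 + (x₀+y₀) * 1 * 0 + (x₀*y₀+y₀) * 1 * 0
          + (x₀+x₀*y₀) * 0 * 0 = 0
      ring
    · change evalConic c (p 1) = 0
      rw [hp1]
      show (0:K) * 0 ^ 2 + 0 * 1 ^ 2 + 0 * 0 ^ 2 + (x₀+y₀) * 0 * 1 + (x₀*y₀+y₀) * 0 * 0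
          + (x₀+x₀*y₀) * 1 * 0 = 0
      ring
    · change evalConic c (p 2) = 0
      rw [hp2]
      show (0:K) * 0 ^ 2 + 0 * 0 ^ 2 + 0 * 1 ^ 2 + (x₀+y₀) * 0 * 0 + (x₀*y₀+y₀) * 0 * 1
          + (x₀+x₀*y₀) * 0 * 1 = 0
      ring
    · change evalConic c (p 3) = 0
      rw [hp3]
      show (0:K) * 1 ^ 2 + 0 * 1 ^ 2 + 0 * 1 ^ 2 + (x₀+y₀) * 1 * 1 + (x₀*y₀+y₀) * 1 * 1
          + (x₀+x₀*y₀) * 1 * 1 = 0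
      linear_combination (x₀ + y₀ + x₀*y₀) * two
    · change evalConic c (p 4) = 0
      rw [hp4]
      show (0:K) * x₀ ^ 2 + 0 * y₀ ^ 2 + 0 * 1 ^ 2 + (x₀+y₀) * x₀ * y₀ + (x₀*y₀+y₀) * x₀ * 1
          + (x₀+x₀*y₀) * y₀ * 1 = 0
      linear_combination (x₀^2*y₀ + x₀*y₀^2 + x₀*y₀) * two
    · exact absurd rfl hj
  -- the conic through p₀,…,p₃,p₅ (omitting p₄)
  set c' : Fin 6 → K := ![0,0,0,x₁+y₁,x₁*y₁+y₁,x₁+x₁*y₁] with hcdef'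
  have hcne' : c' ≠ 0 := by
    intro h
    apply hs1
    have := congrFun h 3
    simpa [hcdef'] using this
  have hvan' : ∀ j : Fin 6, j ≠ 4 → evalConic c' (p j) = 0 := by
    intro j hj
    fin_cases j
    · change evalConic c' (p 0) = 0
      rw [hp0]
      show (0:K) * 1 ^ 2 + 0 * 0 ^ 2 + 0 * 0 ^ 2 + (x₁+y₁) * 1 * 0 + (x₁*y₁+y₁) * 1 * 0
          + (x₁+x₁*y₁) * 0 * 0 = 0
      ring
    · change evalConic c' (p 1) = 0
      rw [hp1]
      show (0:K) * 0 ^ 2 + 0 * 1 ^ 2 + 0 * 0 ^ 2 + (x₁+y₁) * 0 * 1 + (x₁*y₁+y₁) * 0 * 0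
          + (x₁+x₁*y₁) * 1 * 0 = 0
      ring
    · change evalConic c' (p 2) = 0
      rw [hp2]
      show (0:K) * 0 ^ 2 + 0 * 0 ^ 2 + 0 * 1 ^ 2 + (x₁+y₁) * 0 * 0 + (x₁*y₁+y₁) * 0 * 1
          + (x₁+x₁*y₁) * 0 * 1 = 0
      ring
    · change evalConic c' (p 3) = 0
      rw [hp3]
      show (0:K) * 1 ^ 2 + 0 * 1 ^ 2 + 0 * 1 ^ 2 + (x₁+y₁) * 1 * 1 + (x₁*y₁+y₁) * 1 * 1
          + (x₁+x₁*y₁) * 1 * 1 = 0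
      linear_combination (x₁ + y₁ + x₁*y₁) * two
    · exact absurd rfl hj
    · change evalConic c' (p 5) = 0
      rw [hp5]
      show (0:K) * x₁ ^ 2 + 0 * y₁ ^ 2 + 0 * 1 ^ 2 + (x₁+y₁) * x₁ * y₁ + (x₁*y₁+y₁) * x₁ * 1
          + (x₁+x₁*y₁) * y₁ * 1 = 0
      linear_combination (x₁^2*y₁ + x₁*y₁^2 + x₁*y₁) * two
  -- the lines in the coordinate directions through p₄ resp. p₅
  have hm1ne : (![1,0,0] : Fin 3 → K) ≠ 0 := by
    intro h; have := congrFun h 0; simpa using this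
  have hm2ne : (![0,1,0] : Fin 3 → K) ≠ 0 := by
    intro h; have := congrFun h 1; simpa using this
  have hm1a : ∀ t : K, ![1,0,0] ≠ t • p 5 := by
    intro t h
    rw [hp5] at h
    have h2 := congrFun h 2
    have h0 := congrFun h 0
    simp [Pi.smul_apply] at h2 h0
    rw [← h2] at h0
    simp at h0
  have hm2a : ∀ t : K, ![0,1,0] ≠ t • p 5 := by
    intro t h
    rw [hp5] at h
    have h2 := congrFun h 2
    have h1 := congrFun h 1
    simp [Pi.smul_apply] at h2 h1
    rw [← h2] at h1
    simp at h1
  have hm1b : ∀ t : K, ![1,0,0] ≠ t • p 4 := by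
    intro t h
    rw [hp4] at h
    have h2 := congrFun h 2
    have h0 := congrFun h 0
    simp [Pi.smul_apply] at h2 h0
    rw [← h2] at h0
    simp at h0
  have hm2b : ∀ t : K, ![0,1,0] ≠ t • p 4 := by
    intro t h
    rw [hp4] at h
    have h2 := congrFun h 2
    have h1 := congrFun h 1
    simp [Pi.smul_apply] at h2 h1
    rw [← h2] at h1
    simp at h1
  -- the four tangency equations
  have E1 : (x₀+y₀) * (x₁*0 + y₁*1) + (x₀*y₀+y₀) * (x₁*0 + 1*1)
      + (x₀+x₀*y₀) * (y₁*0 + 1*0) = 0 := by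
    have h := tangent_B c (p 5) ![1,0,0] rfl rfl rfl
      (htan 5 c hcne hvan ![1,0,0] hm1ne hm1a)
    rw [hp5] at h
    exact h
  have E2 : (x₀+y₀) * (x₁*1 + y₁*0) + (x₀*y₀+y₀) * (x₁*0 + 1*0)
      + (x₀+x₀*y₀) * (y₁*0 + 1*1) = 0 := by
    have h := tangent_B c (p 5) ![0,1,0] rfl rfl rfl
      (htan 5 c hcne hvan ![0,1,0] hm2ne hm2a)
    rw [hp5] at h
    exact h
  have E3 : (x₁+y₁) * (x₀*0 + y₀*1) + (x₁*y₁+y₁) * (x₀*0 + 1*1)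
      + (x₁+x₁*y₁) * (y₀*0 + 1*0) = 0 := by
    have h := tangent_B c' (p 4) ![1,0,0] rfl rfl rfl
      (htan 4 c' hcne' hvan' ![1,0,0] hm1ne hm1b)
    rw [hp4] at h
    exact h
  have E4 : (x₁+y₁) * (x₀*1 + y₀*0) + (x₁*y₁+y₁) * (x₀*0 + 1*0)
      + (x₁+x₁*y₁) * (y₀*0 + 1*1) = 0 := by
    have h := tangent_B c' (p 4) ![0,1,0] rfl rfl rfl
      (htan 4 c' hcne' hvan' ![0,1,0] hm2ne hm2b)
    rw [hp4] at h
    exact h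
  -- the algebra
  have g2 : x₁ + y₁ = 1 := by
    apply mul_left_cancel₀ hs0
    linear_combination E1 + E2 - (y₀ + x₀ + x₀*y₀) * two
  have g1 : x₀ + y₀ = 1 := by
    apply mul_left_cancel₀ hs1
    linear_combination E3 + E4 - (y₁ + x₁ + x₁*y₁) * two
  have hy0 : y₀ = x₀ + 1 := by linear_combination g1 - x₀ * two
  have hy1 : y₁ = x₁ + 1 := by linear_combination g2 - x₁ * two
  subst hy0 hy1
  have g3 : x₁ = x₀ ^ 2 := by
    linear_combination E1 - (1 + 2*x₀ + x₀*x₁ + x₀^2) * two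
  subst g3
  have hprod : x₀ * (x₀ + 1) * (x₀^2 + x₀ + 1) = 0 := by
    linear_combination E3 - (1 + x₀^2) * two
  have g5 : x₀ ^ 2 + x₀ + 1 = 0 := by
    rcases mul_eq_zero.mp hprod with h | h
    · rcases mul_eq_zero.mp h with h' | h'
      · exact absurd h' hx0
      · exact absurd h' hx0p1
    · exact h
  refine ⟨by linear_combination g1 + two, by linear_combination g2 + two, rfl, ?_, g5⟩
  linear_combination -- y₁ = x₀^2+1 where y₁ := x₀^2+1 after substs? check
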